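/- Let r be an even integer and s any integer. Then ∑_{n=1}^∞ 4^n·n·L_{rn+s} / ((2n+1)·L_r^n·C_n) = (L_{3r+s} + (L_r/2)·L_{2r+s})·(L_r/2) + (L_r·F_{2r+s} − 4·F_{3r+s})·(√5·L_r^2/4)·arctan(β^r) + (4·L_{3r+s} − L_r·L_{2r+s} + (4·F_{3r+s} − L_r·F_{2r+s})·√5)·(π·L_r^2/16). -/

import Mathlib

open MeasureTheory intervalIntegral Real


/-- The golden ratio `α = (1+√5)/2`. -/
noncomputable def goldenAlpha : ℝ := (1 + Real.sqrt 5) / 2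

/-- `β = (1-√5)/2`. -/
noncomputable def goldenBeta : ℝ := (1 - Real.sqrt 5) / 2

/-- Fibonacci numbers with integer index, via the Binet formula. -/
noncomputable def fibZ (s : ℤ) : ℝ := (goldenAlpha ^ s - goldenBeta ^ s) / Real.sqrt 5

/-- Lucas numbers with integer index, via the Binet formula. -/
noncomputable def lucasZ (s : ℤ) : ℝ := goldenAlpha ^ s + goldenBeta ^ s



lemma beta_nat (k : ℕ) : ∀ m : ℕ, ∫ t in (0:ℝ)..1, t ^ m * (1 - t) ^ k
    = (m.factorial * k.factorial : ℝ) / (m + k + 1).factorial := by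
  induction k with
  | zero =>
    intro m
    simp only [pow_zero, mul_one, integral_pow, Nat.add_zero, one_pow, Nat.factorial_succ]
    push_cast
    rw [zero_pow (by omega)]
    have : (m:ℝ) + 1 ≠ 0 := by positivity
    field_simp
    simp
  | succ k ih =>
    intro m
    have h1 : IntervalIntegrable (fun t:ℝ => t^m*(1-t)^(k+1)) volume 0 1 := by
      apply Continuous.intervalIntegrable; fun_prop
    have h2 : IntervalIntegrable (fun t:ℝ => t^(m+1)*(1-t)^k) volume 0 1 := by
      apply Continuous.intervalIntegrable; fun_prop
    have key : ∫ t in (0:ℝ)..1, (((m:ℝ)+1) * (t ^ m * (1-t)^(k+1)) - ((k:ℝ)+1) * (t^(m+1) * (1-t)^k)) = 0 := by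
      have hd : ∀ t ∈ Set.uIcc (0:ℝ) 1, HasDerivAt (fun t : ℝ => t^(m+1) * (1-t)^(k+1))
          (((m:ℝ)+1) * (t ^ m * (1-t)^(k+1)) - ((k:ℝ)+1) * (t^(m+1) * (1-t)^k)) t := by
        intro t _
        have h1 : HasDerivAt (fun t : ℝ => t^(m+1)) (((m:ℝ)+1) * t^m) t := by
          simpa using hasDerivAt_pow (m+1) t
        have h2 : HasDerivAt (fun t : ℝ => (1-t)^(k+1)) (-(((k:ℝ)+1) * (1-t)^k)) t := by
          have := ((hasDerivAt_pow (k+1) (1-t)).comp t ((hasDerivAt_const t (1:ℝ)).sub (hasDerivAt_id t)))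
          simpa [Function.comp_def] using this
        have := h1.mul h2
        refine this.congr_deriv ?_
        push_cast
        ring
      have hcont : IntervalIntegrable (fun t : ℝ => ((m:ℝ)+1) * (t ^ m * (1-t)^(k+1)) - ((k:ℝ)+1) * (t^(m+1) * (1-t)^k)) volume 0 1 := by
        exact (h1.const_mul _).sub (h2.const_mul _)
      have := integral_eq_sub_of_hasDerivAt hd hcont
      simpa using this
    rw [intervalIntegral.integral_sub (h1.const_mul _) (h2.const_mul _),
      intervalIntegral.integral_const_mul, intervalIntegral.integral_const_mul, ih (m+1),
      sub_eq_zero] at key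
    have hm1 : (m:ℝ) + 1 ≠ 0 := by positivity
    have e1 : ∫ t in (0:ℝ)..1, t^m*(1-t)^(k+1)
        = ((k:ℝ)+1) * ((m+1).factorial * k.factorial : ℝ) / ((m + 1 + k + 1).factorial * ((m:ℝ)+1)) := by
      field_simp at key ⊢
      linarith [key]
    rw [e1, show m + 1 + k + 1 = (m + k + 1) + 1 by omega, show m + (k+1) + 1 = (m + k + 1) + 1 by omega]
    rw [Nat.factorial_succ (m+k+1), Nat.factorial_succ k, Nat.factorial_succ m]
    push_cast
    have h2 : ((m+k+1).factorial : ℝ) ≠ 0 := by positivity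
    field_simp

lemma integral_eval {x : ℝ} (hx0 : 0 < x) (hx1 : x < 1) :
    ∫ t in (0:ℝ)..1, 2*(4*x*t*(1-t))/(1-4*x*t*(1-t))^3
      = (1+2*x)/(4*(1-x)^2)
        + (4*x-1) * Real.arctan (Real.sqrt (x/(1-x))) / (4*(1-x)^2 * Real.sqrt (x*(1-x))) := by
  set a : ℝ := 1 - x with ha_def
  have ha : 0 < a := by simp [ha_def]; linarith
  have hax : a + x = 1 := by simp [ha_def]
  set c : ℝ := Real.sqrt (x/a) with hc_def
  have hc : 0 < c := Real.sqrt_pos.mpr (by positivity)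
  have hc2 : c^2 = x/a := Real.sq_sqrt (by positivity)
  have hca : c * a = Real.sqrt (x*a) := by
    rw [hc_def, show a = Real.sqrt (a^2) by rw [Real.sqrt_sq ha.le]]
    rw [← Real.sqrt_mul (by positivity)]
    congr 1
    rw [Real.sqrt_sq ha.le, div_mul_eq_mul_div, sq, ← mul_assoc, mul_div_cancel_right₀ _ ha.ne']
  have hD : ∀ t : ℝ, 0 < a + x*(2*t-1)^2 := fun t => by positivity
  set H : ℝ → ℝ := fun t => (1/(4*a)) * ((2*t-1)/(a+x*(2*t-1)^2)^2)
      + ((4*x-1)/(8*a^2)) * ((2*t-1)/(a+x*(2*t-1)^2))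
      + ((4*x-1)/(8*a^2*(c*a))) * Real.arctan ((2*t-1)*c) with hH_def
  have hderiv : ∀ t ∈ Set.uIcc (0:ℝ) 1, HasDerivAt H (2*(4*x*t*(1-t))/(1-4*x*t*(1-t))^3) t := by
    intro t _
    have h2t : HasDerivAt (fun t : ℝ => 2*t-1) 2 t := by
      simpa using ((hasDerivAt_id t).const_mul 2).sub_const 1
    have hDd : HasDerivAt (fun t : ℝ => a + x*(2*t-1)^2) (x*(2*(2*t-1)*2)) t := by
      have := (((h2t.pow 2).const_mul x).const_add a)
      refine this.congr_deriv ?_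
      norm_num
    have h1 : HasDerivAt (fun t : ℝ => (2*t-1)/(a+x*(2*t-1)^2)^2)
        ((2 * (a+x*(2*t-1)^2)^2 - (2*t-1) * (2*(a+x*(2*t-1)^2)^1*(x*(2*(2*t-1)*2))))/((a+x*(2*t-1)^2)^2)^2) t :=
      h2t.div (hDd.pow 2) (by positivity)
    have h2 : HasDerivAt (fun t : ℝ => (2*t-1)/(a+x*(2*t-1)^2))
        ((2 * (a+x*(2*t-1)^2) - (2*t-1) * (x*(2*(2*t-1)*2)))/(a+x*(2*t-1)^2)^2) t :=
      h2t.div hDd (by positivity)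
    have h3 : HasDerivAt (fun t : ℝ => Real.arctan ((2*t-1)*c))
        (1 / (1 + ((2*t-1)*c)^2) * (2*c)) t := by
      have := (Real.hasDerivAt_arctan ((2*t-1)*c)).comp t (h2t.mul_const c)
      simpa [Function.comp_def] using this
    have hsum := ((h1.const_mul (1/(4*a))).add (h2.const_mul ((4*x-1)/(8*a^2)))).add
      (h3.const_mul ((4*x-1)/(8*a^2*(c*a))))
    have harr : 1 + ((2*t-1)*c)^2 = (a + x*(2*t-1)^2)/a := by
      rw [mul_pow, hc2]; field_simp
    refine hsum.congr_deriv ?_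
    rw [harr]
    have h1x : 1 - 4*x*t*(1-t) = a + x*(2*t-1)^2 := by rw [ha_def]; ring
    rw [h1x]
    have hD' := (hD t).ne'
    field_simp
    ring
  have hcont : IntervalIntegrable (fun t : ℝ => 2*(4*x*t*(1-t))/(1-4*x*t*(1-t))^3) volume 0 1 := by
    apply ContinuousOn.intervalIntegrable
    apply ContinuousOn.div (by fun_prop) (by fun_prop)
    intro t ht
    rw [Set.uIcc_of_le (by norm_num)] at ht
    have h1x : 1 - 4*x*t*(1-t) = a + x*(2*t-1)^2 := by rw [ha_def]; ring
    rw [h1x]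
    positivity
  have := integral_eq_sub_of_hasDerivAt hderiv hcont
  rw [this]
  rw [hH_def]
  simp only []
  have e1 : a + x*(2*(1:ℝ)-1)^2 = 1 := by rw [← hax]; ring
  have e0 : a + x*(2*(0:ℝ)-1)^2 = 1 := by rw [← hax]; ring
  rw [e1, e0]
  rw [show (2*(1:ℝ)-1) = 1 by norm_num, show (2*(0:ℝ)-1) = -1 by norm_num]
  rw [show (-1 : ℝ) * c = -c by ring, Real.arctan_neg]
  rw [← hca]
  have : a^2 = (1-x)^2 := by rw [ha_def]
  rw [← this] at *
  have hc' : c ≠ 0 := hc.ne'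
  have ha' : a ≠ 0 := ha.ne'
  field_simp
  ring

lemma catalan_cast_pos (m : ℕ) : (0:ℝ) < (catalan m : ℝ) := by
  have h := succ_mul_catalan_eq_centralBinom m
  have h2 := Nat.centralBinom_pos m
  have : 0 < catalan m := by
    rcases Nat.eq_zero_or_pos (catalan m) with h0 | h0
    · rw [h0, mul_zero] at h; omega
    · exact h0
  exact_mod_cast this

lemma catalan_fact (m : ℕ) : ((2*m+1).factorial : ℕ)
    = (2*m+1) * (((m+1) * catalan m) * (m.factorial * m.factorial)) := by
  rw [succ_mul_catalan_eq_centralBinom]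
  rw [show (2*m+1) = (2*m)+1 from rfl, Nat.factorial_succ]
  congr 1
  have := Nat.choose_mul_factorial_mul_factorial (show m ≤ 2*m by omega)
  rw [Nat.centralBinom]
  rw [show 2*m - m = m by omega] at this
  rw [← this]
  ring

lemma hasSum_aux {u : ℝ} (hu : |u| < 1) :
    HasSum (fun n : ℕ => ((n:ℝ)+1)*((n:ℝ)+2)*u^(n+1)) (2*u/(1-u)^3) := by
  have h := hasSum_choose_mul_geometric_of_norm_lt_one (𝕜 := ℝ) 2 (by rwa [Real.norm_eq_abs])
  have h2 := h.mul_left (2*u)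
  have hfun : ∀ n : ℕ, 2*u * (((n+2).choose 2 : ℝ) * u^n) = ((n:ℝ)+1)*((n:ℝ)+2)*u^(n+1) := by
    intro n
    have hnat : (n+2).choose 2 * 2 = (n+2) * (n+1) := by
      rw [Nat.choose_two_right, show (n+2) - 1 = n+1 by omega]
      rw [Nat.div_mul_cancel (by rw [mul_comm]; exact (Nat.even_mul_succ_self (n+1)).two_dvd)]
    have : ((n+2).choose 2 : ℝ) * 2 = ((n:ℝ)+2) * ((n:ℝ)+1) := by exact_mod_cast hnat
    linear_combination u^(n+1) * this
  have h3 : HasSum (fun n : ℕ => ((n:ℝ)+1)*((n:ℝ)+2)*u^(n+1)) (2*u * (1/(1-u)^3)) := by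
    exact h2.congr_fun (fun n => (hfun n).symm)
  convert h3 using 1
  ring

lemma lemA {x : ℝ} (hx0 : 0 < x) (hx1 : x < 1) :
    HasSum (fun n : ℕ => (4:ℝ)^(n+1) * ((n:ℝ)+1) * x^(n+1)
        / ((2*((n:ℝ)+1)+1) * (catalan (n+1) : ℝ)))
      ((1+2*x)/(4*(1-x)^2)
        + (4*x-1) * Real.arctan (Real.sqrt (x/(1-x))) / (4*(1-x)^2 * Real.sqrt (x*(1-x)))) := by
  set T : ℕ → ℝ := fun n => (4:ℝ)^(n+1) * ((n:ℝ)+1) * x^(n+1)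
      / ((2*((n:ℝ)+1)+1) * (catalan (n+1) : ℝ)) with hT_def
  set f : ℕ → ℝ → ℝ := fun n t => ((n:ℝ)+1)*((n:ℝ)+2)*(4*x*t*(1-t))^(n+1) with hf_def
  -- term = integral
  have termEq : ∀ n : ℕ, T n = ∫ t in Set.Ioc (0:ℝ) 1, f n t := by
    intro n
    rw [← intervalIntegral.integral_of_le zero_le_one]
    have expand : ∀ t : ℝ, f n t
        = (((n:ℝ)+1)*((n:ℝ)+2)*(4*x)^(n+1)) * (t^(n+1)*(1-t)^(n+1)) := by
      intro t
      rw [hf_def]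
      simp only []
      rw [show 4*x*t*(1-t) = (4*x)*(t*(1-t)) by ring, mul_pow (4*x) (t*(1-t)), mul_pow t (1-t)]
      ring
    simp_rw [expand]
    rw [intervalIntegral.integral_const_mul, beta_nat (n+1) (n+1)]
    have hcat := catalan_cast_pos (n+1)
    have hfact := catalan_fact (n+1)
    have hfactR : ((2*(n+1)+1).factorial : ℝ)
        = (2*((n:ℝ)+1)+1) * ((((n:ℝ)+1+1) * (catalan (n+1) : ℝ)) * ((n+1).factorial * (n+1).factorial : ℝ)) := by
      exact_mod_cast hfact
    rw [hT_def]
    simp only []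
    rw [show (n+1) + (n+1) + 1 = 2*(n+1)+1 by omega, hfactR]
    have h1 : ((n+1).factorial : ℝ) ≠ 0 := by positivity
    have h2 : (2*((n:ℝ)+1)+1) ≠ 0 := by positivity
    have h3 : ((catalan (n+1) : ℝ)) ≠ 0 := hcat.ne'
    field_simp
    ring
  -- integrability
  have hInt : ∀ n : ℕ, Integrable (f n) (volume.restrict (Set.Ioc (0:ℝ) 1)) := by
    intro n
    have : Continuous (f n) := by fun_prop
    exact this.integrableOn_Ioc
  -- nonneg & bound
  have hfnonneg : ∀ n : ℕ, ∀ t ∈ Set.Ioc (0:ℝ) 1, 0 ≤ f n t := by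
    intro n t ht
    rw [hf_def]
    simp only []
    have h1 : 0 ≤ 4*x*t*(1-t) := by
      have := ht.1; have := ht.2
      have h1t : 0 ≤ 1 - t := by linarith
      positivity
    positivity
  have hTnonneg : ∀ n : ℕ, 0 ≤ T n := by
    intro n
    rw [hT_def]
    have := catalan_cast_pos (n+1)
    positivity
  have hTle : ∀ n : ℕ, T n ≤ ((n:ℝ)+1)*((n:ℝ)+2)*x^(n+1) := by
    intro n
    have hkey : (4:ℕ)^(n+1) ≤ (2*(n+1)+1) * ((n+1+1) * catalan (n+1)) := by
      have h1 := Nat.four_pow_le_two_mul_add_one_mul_central_binom (n+1)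
      rw [succ_mul_catalan_eq_centralBinom (n+1)]
      exact h1
    have hkeyR : (4:ℝ)^(n+1) ≤ (2*((n:ℝ)+1)+1) * ((((n:ℝ)+1)+1) * (catalan (n+1) : ℝ)) := by
      exact_mod_cast hkey
    rw [hT_def]
    simp only []
    have hcat := catalan_cast_pos (n+1)
    have hden : (0:ℝ) < (2*((n:ℝ)+1)+1) * (catalan (n+1) : ℝ) := by positivity
    rw [div_le_iff₀ hden]
    have hxp : (0:ℝ) ≤ ((n:ℝ)+1) * x^(n+1) := by positivity
    calc (4:ℝ)^(n+1) * ((n:ℝ)+1) * x^(n+1)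
        ≤ ((2*((n:ℝ)+1)+1) * ((((n:ℝ)+1)+1) * (catalan (n+1) : ℝ))) * (((n:ℝ)+1) * x^(n+1)) := by
          rw [mul_assoc]
          exact mul_le_mul_of_nonneg_right hkeyR hxp
      _ = ((n:ℝ)+1)*((n:ℝ)+2)*x^(n+1) * ((2*((n:ℝ)+1)+1) * (catalan (n+1) : ℝ)) := by ring
  have hbsum : Summable (fun n : ℕ => ((n:ℝ)+1)*((n:ℝ)+2)*x^(n+1)) :=
    (hasSum_aux (by rw [abs_of_nonneg hx0.le]; exact hx1)).summable
  have hTsummable : Summable T := Summable.of_nonneg_of_le hTnonneg hTle hbsum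
  -- norm integrals
  have hnormEq : ∀ n : ℕ, (∫ t in Set.Ioc (0:ℝ) 1, ‖f n t‖) = T n := by
    intro n
    rw [termEq n]
    apply setIntegral_congr_fun measurableSet_Ioc
    intro t ht
    exact norm_of_nonneg (hfnonneg n t ht)
  have hsumnorm : Summable (fun n : ℕ => ∫ t in Set.Ioc (0:ℝ) 1, ‖f n t‖) := by
    apply Summable.congr hTsummable
    intro n
    exact (hnormEq n).symm
  -- swap
  have hswap := MeasureTheory.integral_tsum_of_summable_integral_norm hInt hsumnorm
  -- pointwise
  have hpt : ∀ t ∈ Set.Ioc (0:ℝ) 1, (∑' n, f n t) = 2*(4*x*t*(1-t))/(1-4*x*t*(1-t))^3 := by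
    intro t ht
    have h1t : 0 ≤ 1 - t := by linarith [ht.2]
    have hu0 : 0 ≤ 4*x*t*(1-t) := by have := ht.1; positivity
    have hu1 : 4*x*t*(1-t) < 1 := by nlinarith [sq_nonneg (2*t-1), ht.1, hx1, hx0]
    exact (hasSum_aux (by rw [abs_of_nonneg hu0]; exact hu1)).tsum_eq
  have htsum : ∑' n, T n = (1+2*x)/(4*(1-x)^2)
      + (4*x-1) * Real.arctan (Real.sqrt (x/(1-x))) / (4*(1-x)^2 * Real.sqrt (x*(1-x))) := by
    calc ∑' n, T n = ∑' n, ∫ t in Set.Ioc (0:ℝ) 1, f n t := by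
          exact tsum_congr termEq
      _ = ∫ t in Set.Ioc (0:ℝ) 1, (∑' n, f n t) := hswap
      _ = ∫ t in Set.Ioc (0:ℝ) 1, 2*(4*x*t*(1-t))/(1-4*x*t*(1-t))^3 := by
          exact setIntegral_congr_fun measurableSet_Ioc hpt
      _ = ∫ t in (0:ℝ)..1, 2*(4*x*t*(1-t))/(1-4*x*t*(1-t))^3 := by
          rw [intervalIntegral.integral_of_le zero_le_one]
      _ = _ := integral_eval hx0 hx1
  exact hTsummable.hasSum_iff.mpr htsum


lemma s5pos : (0:ℝ) < Real.sqrt 5 := Real.sqrt_pos.mpr (by norm_num)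
lemma s5sq : Real.sqrt 5 ^ 2 = 5 := Real.sq_sqrt (by norm_num)
lemma s5gt : (1:ℝ) < Real.sqrt 5 := by nlinarith [s5sq, s5pos]
lemma alpha_pos : 0 < goldenAlpha := by unfold goldenAlpha; nlinarith [s5pos]
lemma beta_neg : goldenBeta < 0 := by unfold goldenBeta; nlinarith [s5gt]
lemma alpha_mul_beta : goldenAlpha * goldenBeta = -1 := by
  unfold goldenAlpha goldenBeta; nlinarith [s5sq]

lemma zpow_help {a : ℝ} (ha : a ≠ 0) (r s : ℤ) (k : ℕ) :
    a ^ ((k:ℤ)*r + s) = (a^r)^k * a^s := by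
  rw [zpow_add₀ ha, mul_comm (k:ℤ) r, zpow_mul, zpow_natCast]

lemma zpow_help' {a : ℝ} (ha : a ≠ 0) (r s : ℤ) (n : ℕ) :
    a ^ (r*((n:ℤ)+1) + s) = (a^r)^(n+1) * a^s := by
  rw [zpow_add₀ ha, zpow_mul, show ((n:ℤ)+1) = ((n+1:ℕ):ℤ) by push_cast; ring, zpow_natCast]

lemma AB_one {r : ℤ} (hr : Even r) : goldenAlpha ^ r * goldenBeta ^ r = 1 := by
  rw [← mul_zpow, alpha_mul_beta]
  exact hr.neg_one_zpow

lemma catalan_cast_pos' (m : ℕ) : (0:ℝ) < (catalan m : ℝ) := by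
  have h := succ_mul_catalan_eq_centralBinom m
  have h2 := Nat.centralBinom_pos m
  have : 0 < catalan m := by
    rcases Nat.eq_zero_or_pos (catalan m) with h0 | h0
    · rw [h0, mul_zero] at h; omega
    · exact h0
  exact_mod_cast this

set_option maxHeartbeats 2000000 in
/-- Theorem 3 of the paper (Lucas part): for `r` even and any integer `s`,
`∑_{n=1}^∞ 4^n·n·L_{rn+s}/((2n+1)·L_r^n·C_n)` has the stated closed form. -/
theorem lucas_even_r_catalan_sum (r s : ℤ) (hr : Even r) :
    ∑' n : ℕ, 4 ^ (n + 1) * ((n : ℝ) + 1) * lucasZ (r * ((n : ℤ) + 1) + s)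
        / ((2 * ((n : ℝ) + 1) + 1) * lucasZ r ^ (n + 1) * (catalan (n + 1) : ℝ))
      = (lucasZ (3 * r + s) + lucasZ r / 2 * lucasZ (2 * r + s)) * (lucasZ r / 2)
        + (lucasZ r * fibZ (2 * r + s) - 4 * fibZ (3 * r + s))
            * (Real.sqrt 5 * lucasZ r ^ 2 / 4) * Real.arctan (goldenBeta ^ r)
        + (4 * lucasZ (3 * r + s) - lucasZ r * lucasZ (2 * r + s)
            + (4 * fibZ (3 * r + s) - lucasZ r * fibZ (2 * r + s)) * Real.sqrt 5)
            * (Real.pi * lucasZ r ^ 2 / 16) := by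
  have hαne : goldenAlpha ≠ 0 := alpha_pos.ne'
  have hβne : goldenBeta ≠ 0 := beta_neg.ne
  set A : ℝ := goldenAlpha ^ r with hA_def
  set B : ℝ := goldenBeta ^ r with hB_def
  set P : ℝ := goldenAlpha ^ s with hP_def
  set Q : ℝ := goldenBeta ^ s with hQ_def
  have hA : 0 < A := zpow_pos alpha_pos r
  have hAB : A * B = 1 := AB_one hr
  have hBA : B = A⁻¹ := by field_simp; linarith [hAB]
  have hB : 0 < B := by rw [hBA]; positivity
  have hLsum : lucasZ r = A + B := rfl
  have hLpos : 0 < A + B := by positivity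
  set x₁ : ℝ := A / (A + B) with hx₁_def
  set x₂ : ℝ := B / (A + B) with hx₂_def
  have hx₁0 : 0 < x₁ := by positivity
  have hx₂0 : 0 < x₂ := by positivity
  have hx₁1 : x₁ < 1 := by rw [hx₁_def, div_lt_one hLpos]; linarith
  have hx₂1 : x₂ < 1 := by rw [hx₂_def, div_lt_one hLpos]; linarith
  have h1x₁ : 1 - x₁ = B / (A + B) := by rw [hx₁_def]; field_simp; ring
  have h1x₂ : 1 - x₂ = A / (A + B) := by rw [hx₂_def]; field_simp; ring
  -- sqrt computations
  have hs₁ : Real.sqrt (x₁ / (1 - x₁)) = A := by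
    rw [h1x₁, hx₁_def, show A/(A+B) / (B/(A+B)) = A^2 by
      rw [hBA]; field_simp]
    exact Real.sqrt_sq hA.le
  have hs₂ : Real.sqrt (x₂ / (1 - x₂)) = B := by
    rw [h1x₂, hx₂_def, show B/(A+B) / (A/(A+B)) = B^2 by
      rw [hBA]; field_simp]
    exact Real.sqrt_sq hB.le
  have hq₁ : Real.sqrt (x₁ * (1 - x₁)) = (A+B)⁻¹ := by
    rw [h1x₁, hx₁_def, show A/(A+B) * (B/(A+B)) = ((A+B)⁻¹)^2 by
      rw [div_mul_div_comm, hAB, ← sq, inv_pow, one_div]]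
    exact Real.sqrt_sq (by positivity)
  have hq₂ : Real.sqrt (x₂ * (1 - x₂)) = (A+B)⁻¹ := by
    rw [h1x₂, hx₂_def, show B/(A+B) * (A/(A+B)) = ((A+B)⁻¹)^2 by
      rw [div_mul_div_comm, mul_comm B A, hAB, ← sq, inv_pow, one_div]]
    exact Real.sqrt_sq (by positivity)
  have harct : Real.arctan A = Real.pi/2 - Real.arctan B := by
    rw [show A = B⁻¹ by rw [hBA]; field_simp]
    exact Real.arctan_inv_of_pos hB
  -- series terms
  have hS1 := lemA hx₁0 hx₁1
  have hS2 := lemA hx₂0 hx₂1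
  have hsum := (hS1.mul_left P).add (hS2.mul_left Q)
  have hterm : ∀ n : ℕ,
      4 ^ (n + 1) * ((n : ℝ) + 1) * lucasZ (r * ((n : ℤ) + 1) + s)
        / ((2 * ((n : ℝ) + 1) + 1) * lucasZ r ^ (n + 1) * (catalan (n + 1) : ℝ))
      = P * ((4:ℝ)^(n+1) * ((n:ℝ)+1) * x₁^(n+1) / ((2*((n:ℝ)+1)+1) * (catalan (n+1) : ℝ)))
        + Q * ((4:ℝ)^(n+1) * ((n:ℝ)+1) * x₂^(n+1) / ((2*((n:ℝ)+1)+1) * (catalan (n+1) : ℝ))) := by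
    intro n
    have hlz : lucasZ (r * ((n : ℤ) + 1) + s) = A^(n+1) * P + B^(n+1) * Q := by
      rw [show lucasZ (r * ((n : ℤ) + 1) + s)
          = goldenAlpha ^ (r * ((n : ℤ) + 1) + s) + goldenBeta ^ (r * ((n : ℤ) + 1) + s) from rfl,
        zpow_help' hαne r s n, zpow_help' hβne r s n]
    rw [hlz, hLsum, hx₁_def, hx₂_def, div_pow, div_pow]
    have hcat := catalan_cast_pos' (n+1)
    have hden : ((2:ℝ)*((n:ℝ)+1)+1) ≠ 0 := by positivity
    have hLn : (A+B)^(n+1) ≠ 0 := by positivity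
    field_simp
  rw [tsum_congr hterm, hsum.tsum_eq]
  -- final algebra
  rw [hs₁, hs₂, hq₁, hq₂, h1x₁, h1x₂, harct]
  have hF2 : fibZ (2*r+s) = (A^2*P - B^2*Q) / Real.sqrt 5 := by
    rw [show fibZ (2*r+s) = (goldenAlpha ^ (2*r+s) - goldenBeta ^ (2*r+s)) / Real.sqrt 5 from rfl,
      show (2:ℤ)*r+s = ((2:ℕ):ℤ)*r+s by norm_num, zpow_help hαne, zpow_help hβne]
  have hF3 : fibZ (3*r+s) = (A^3*P - B^3*Q) / Real.sqrt 5 := by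
    rw [show fibZ (3*r+s) = (goldenAlpha ^ (3*r+s) - goldenBeta ^ (3*r+s)) / Real.sqrt 5 from rfl,
      show (3:ℤ)*r+s = ((3:ℕ):ℤ)*r+s by norm_num, zpow_help hαne, zpow_help hβne]
  have hL2 : lucasZ (2*r+s) = A^2*P + B^2*Q := by
    rw [show lucasZ (2*r+s) = goldenAlpha ^ (2*r+s) + goldenBeta ^ (2*r+s) from rfl,
      show (2:ℤ)*r+s = ((2:ℕ):ℤ)*r+s by norm_num, zpow_help hαne, zpow_help hβne]
  have hL3 : lucasZ (3*r+s) = A^3*P + B^3*Q := by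
    rw [show lucasZ (3*r+s) = goldenAlpha ^ (3*r+s) + goldenBeta ^ (3*r+s) from rfl,
      show (3:ℤ)*r+s = ((3:ℕ):ℤ)*r+s by norm_num, zpow_help hαne, zpow_help hβne]
  rw [hF2, hF3, hL2, hL3, hLsum, hx₁_def, hx₂_def, hBA]
  have hAne : A ≠ 0 := hA.ne'
  have hS5 : Real.sqrt 5 ≠ 0 := s5pos.ne'
  have hAA : A + A⁻¹ ≠ 0 := by positivity
  field_simp
  ring
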